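/- If A is an n×n complex matrix all of whose eigenvalues have positive real part, and B, C are n×n matrices, then the controllability Gramian L = ∫₀^∞ e^{-tA} B B* e^{-tA*} dt converges and satisfies the Lyapunov equation A L + L A* = B B*. -/

import Mathlib

open MeasureTheory Matrix NormedSpace
open scoped Nat

attribute [local instance] Matrix.linftyOpNormedAddCommGroup Matrix.linftyOpNormedRing
  Matrix.linftyOpNormedAlgebra

noncomputable instance Stmt0Aux.instCENorm {n : ℕ} : ContinuousENorm (Matrix (Fin n) (Fin n) ℂ) :=
  @SeminormedAddGroup.toContinuousENorm _ Matrix.linftyOpSeminormedAddCommGroup.toSeminormedAddGroup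

instance Stmt0Aux.instPMS {n : ℕ} :
    TopologicalSpace.PseudoMetrizableSpace (Matrix (Fin n) (Fin n) ℂ) :=
  inferInstanceAs (TopologicalSpace.PseudoMetrizableSpace (Fin n → Fin n → ℂ))

namespace Stmt0Aux

variable {n : ℕ}

lemma entry_norm_le (M : Matrix (Fin n) (Fin n) ℂ) (i j : Fin n) : ‖M i j‖ ≤ ‖M‖ := by
  rw [Matrix.linfty_opNorm_def]
  have h1 : ‖M i j‖₊ ≤ ∑ j' : Fin n, ‖M i j'‖₊ :=
    Finset.single_le_sum (f := fun j' : Fin n => ‖M i j'‖₊) (fun _ _ => zero_le)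
      (Finset.mem_univ j)
  have h2 : (∑ j' : Fin n, ‖M i j'‖₊) ≤ Finset.univ.sup fun i : Fin n => ∑ j' : Fin n, ‖M i j'‖₊ :=
    Finset.le_sup (f := fun i : Fin n => ∑ j' : Fin n, ‖M i j'‖₊) (Finset.mem_univ i)
  exact_mod_cast h1.trans h2

lemma norm_le_sum_entries (M : Matrix (Fin n) (Fin n) ℂ) :
    ‖M‖ ≤ ∑ i : Fin n, ∑ j : Fin n, ‖M i j‖ := by
  rw [Matrix.linfty_opNorm_def]
  have h : (Finset.univ.sup fun i : Fin n => ∑ j : Fin n, ‖M i j‖₊)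
      ≤ ∑ i : Fin n, ∑ j : Fin n, ‖M i j‖₊ :=
    Finset.sup_le fun i _ =>
      Finset.single_le_sum (f := fun i : Fin n => ∑ j : Fin n, ‖M i j‖₊)
        (fun _ _ => zero_le) (Finset.mem_univ i)
  calc ((Finset.univ.sup fun i : Fin n => ∑ j : Fin n, ‖M i j‖₊ : NNReal) : ℝ)
      ≤ ((∑ i : Fin n, ∑ j : Fin n, ‖M i j‖₊ : NNReal) : ℝ) := by exact_mod_cast h
    _ = ∑ i : Fin n, ∑ j : Fin n, ‖M i j‖ := by push_cast; rfl

lemma vec_decay (A : Matrix (Fin n) (Fin n) ℂ) {ε : ℝ} (hε : 0 < ε)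
    (hspec : ∀ μ ∈ spectrum ℂ A, 2 * ε ≤ μ.re) (v : Fin n → ℂ) :
    ∃ C : ℝ, 0 ≤ C ∧ ∀ t : ℝ, 0 ≤ t →
      ‖exp ((-(t : ℂ)) • A) *ᵥ v‖ ≤ C * Real.exp (-ε * t) := by
  classical
  set f : Module.End ℂ (Fin n → ℂ) := Matrix.toLinAlgEquiv' A with hfdef
  have hv : v ∈ ⨆ μ : ℂ, f.maxGenEigenspace μ := by
    rw [Module.End.iSup_maxGenEigenspace_eq_top]; trivial
  refine Submodule.iSup_induction _ (motive := fun w => ∃ C : ℝ, 0 ≤ C ∧ ∀ t : ℝ, 0 ≤ t →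
      ‖exp ((-(t : ℂ)) • A) *ᵥ w‖ ≤ C * Real.exp (-ε * t)) hv ?_ ?_ ?_
  · -- elements of a generalized eigenspace
    rintro μ x hx
    rcases eq_or_ne x 0 with rfl | hx0
    · exact ⟨0, le_refl 0, fun t _ => by simp [Matrix.mulVec_zero]⟩
    obtain ⟨k, hk⟩ := (Module.End.mem_maxGenEigenspace f μ x).mp hx
    have hμA : μ ∈ spectrum ℂ A := by
      have h1 : x ∈ f.genEigenspace μ k := Module.End.mem_genEigenspace_nat.mpr hk
      have h2 : f.HasGenEigenvalue μ k :=
        Module.End.hasGenEigenvalue_iff.mpr (Submodule.ne_bot_iff _ |>.mpr ⟨x, h1, hx0⟩)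
      have h3 : μ ∈ spectrum ℂ f :=
        (Module.End.hasEigenvalue_of_hasGenEigenvalue h2).mem_spectrum
      rwa [hfdef, AlgEquiv.spectrum_eq] at h3
    set N : Matrix (Fin n) (Fin n) ℂ := A - μ • 1 with hNdef
    have hNk : N ^ k *ᵥ x = 0 := by
      have h3 : Matrix.toLinAlgEquiv' (N ^ k) = (f - μ • 1) ^ k := by
        rw [map_pow, map_sub, _root_.map_smul, _root_.map_one]
      calc N ^ k *ᵥ x = (Matrix.toLinAlgEquiv' (N ^ k)) x :=
            (Matrix.toLinAlgEquiv'_apply _ _).symm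
        _ = ((f - μ • 1) ^ k) x := by rw [h3]
        _ = 0 := hk
    have key : ∀ t : ℝ, exp ((-(t : ℂ)) • A) *ᵥ x
        = Complex.exp ((-(t : ℂ)) * μ) •
          ∑ j ∈ Finset.range k, (((j ! : ℂ))⁻¹ * (-(t : ℂ)) ^ j) • (N ^ j *ᵥ x) := by
      intro t
      have hsplit : (-(t : ℂ)) • A
          = ((-(t : ℂ)) * μ) • (1 : Matrix (Fin n) (Fin n) ℂ) + (-(t : ℂ)) • N := by
        rw [mul_smul, ← smul_add]
        congr 1
        simp [hNdef]
      have hcomm : Commute (((-(t : ℂ)) * μ) • (1 : Matrix (Fin n) (Fin n) ℂ))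
          ((-(t : ℂ)) • N) := ((Commute.one_left N).smul_left _).smul_right _
      have h1 : exp (((-(t : ℂ)) * μ) • (1 : Matrix (Fin n) (Fin n) ℂ))
          = Complex.exp ((-(t : ℂ)) * μ) • (1 : Matrix (Fin n) (Fin n) ℂ) := by
        have hmap := map_exp (algebraMap ℂ (Matrix (Fin n) (Fin n) ℂ))
          (continuous_algebraMap _ _) ((-(t : ℂ)) * μ)
        simp only [Algebra.algebraMap_eq_smul_one] at hmap
        rw [← Complex.exp_eq_exp_ℂ] at hmap
        exact hmap.symm
      rw [hsplit, Matrix.exp_add_of_commute _ _ hcomm, h1, smul_mul_assoc, one_mul,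
        Matrix.smul_mulVec]
      congr 1
      -- now : exp ((-(t : ℂ)) • N) *ᵥ x = ∑ ...
      have hsummable : Summable (fun j : ℕ => ((j ! : ℂ))⁻¹ • ((-(t : ℂ)) • N) ^ j) :=
        expSeries_summable' _
      let Lx : Matrix (Fin n) (Fin n) ℂ →ₗ[ℂ] (Fin n → ℂ) :=
        { toFun := fun M => M *ᵥ x
          map_add' := fun M₁ M₂ => Matrix.add_mulVec M₁ M₂ x
          map_smul' := fun c M => Matrix.smul_mulVec c M x }
      have hterm : ∀ j : ℕ, (((j ! : ℂ))⁻¹ • ((-(t : ℂ)) • N) ^ j) *ᵥ x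
          = (((j ! : ℂ))⁻¹ * (-(t : ℂ)) ^ j) • (N ^ j *ᵥ x) := by
        intro j
        rw [smul_pow, Matrix.smul_mulVec, Matrix.smul_mulVec, smul_smul]
      calc exp ((-(t : ℂ)) • N) *ᵥ x
          = (LinearMap.toContinuousLinearMap Lx)
              (∑' j : ℕ, ((j ! : ℂ))⁻¹ • ((-(t : ℂ)) • N) ^ j) := by
            rw [exp_eq_tsum ℂ]
            rfl
        _ = ∑' j : ℕ, (LinearMap.toContinuousLinearMap Lx)
              (((j ! : ℂ))⁻¹ • ((-(t : ℂ)) • N) ^ j) :=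
            (LinearMap.toContinuousLinearMap Lx).map_tsum hsummable
        _ = ∑' j : ℕ, (((j ! : ℂ))⁻¹ * (-(t : ℂ)) ^ j) • (N ^ j *ᵥ x) := by
            simp only [LinearMap.coe_toContinuousLinearMap']
            exact tsum_congr fun j => hterm j
        _ = ∑ j ∈ Finset.range k, (((j ! : ℂ))⁻¹ * (-(t : ℂ)) ^ j) • (N ^ j *ᵥ x) := by
            refine tsum_eq_sum fun j hj => ?_
            have hkj : k ≤ j := by
              by_contra h
              exact hj (Finset.mem_range.mpr (lt_of_not_ge h))
            have hNj : N ^ j *ᵥ x = 0 := by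
              have : N ^ j = N ^ (j - k) * N ^ k := by
                rw [← pow_add, Nat.sub_add_cancel hkj]
              rw [this, ← Matrix.mulVec_mulVec, hNk, Matrix.mulVec_zero]
            rw [hNj, smul_zero]
    refine ⟨∑ j ∈ Finset.range k, ε⁻¹ ^ j * ‖N ^ j *ᵥ x‖, by positivity, ?_⟩
    intro t ht
    have h2 : ‖Complex.exp ((-(t : ℂ)) * μ)‖ = Real.exp (-(t * μ.re)) := by
      rw [Complex.norm_exp]
      congr 1
      simp [Complex.mul_re]
    have hmono : Real.exp (-(t * μ.re)) ≤ Real.exp (-(2 * ε) * t) := by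
      apply Real.exp_le_exp.mpr
      have := hspec μ hμA
      nlinarith
    have hpow : ∀ j : ℕ, t ^ j ≤ (j ! : ℝ) * ε⁻¹ ^ j * Real.exp (ε * t) := by
      intro j
      have h := Real.pow_div_factorial_le_exp (ε * t) (mul_nonneg hε.le ht) j
      have hj : (0 : ℝ) < (j ! : ℝ) := by positivity
      rw [div_le_iff₀ hj] at h
      have hεne : ε ≠ 0 := hε.ne'
      calc t ^ j = ε⁻¹ ^ j * (ε * t) ^ j := by
            rw [mul_pow, ← mul_assoc, ← mul_pow, inv_mul_cancel₀ hεne, one_pow, one_mul]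
        _ ≤ ε⁻¹ ^ j * (Real.exp (ε * t) * (j ! : ℝ)) := by
            have : (0:ℝ) ≤ ε⁻¹ ^ j := by positivity
            exact mul_le_mul_of_nonneg_left h this
        _ = (j ! : ℝ) * ε⁻¹ ^ j * Real.exp (ε * t) := by ring
    have hsum : ‖∑ j ∈ Finset.range k, (((j ! : ℂ))⁻¹ * (-(t : ℂ)) ^ j) • (N ^ j *ᵥ x)‖
        ≤ ∑ j ∈ Finset.range k, (j ! : ℝ)⁻¹ * t ^ j * ‖N ^ j *ᵥ x‖ := by
      refine (norm_sum_le _ _).trans (Finset.sum_le_sum fun j _ => ?_)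
      rw [norm_smul, norm_mul, norm_inv, norm_pow, norm_neg]
      have h3 : ‖((j ! : ℕ) : ℂ)‖ = (j ! : ℝ) := by
        rw [Complex.norm_natCast]
      have h4 : ‖((t : ℝ) : ℂ)‖ = t := by
        rw [Complex.norm_real, Real.norm_eq_abs, abs_of_nonneg ht]
      rw [h3, h4]
    calc ‖exp ((-(t : ℂ)) • A) *ᵥ x‖
        = ‖Complex.exp ((-(t : ℂ)) * μ)‖ *
          ‖∑ j ∈ Finset.range k, (((j ! : ℂ))⁻¹ * (-(t : ℂ)) ^ j) • (N ^ j *ᵥ x)‖ := by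
          rw [key t, norm_smul]
      _ ≤ Real.exp (-(2 * ε) * t) *
          ∑ j ∈ Finset.range k, (j ! : ℝ)⁻¹ * t ^ j * ‖N ^ j *ᵥ x‖ := by
          rw [h2]
          exact mul_le_mul hmono hsum (norm_nonneg _) (Real.exp_nonneg _)
      _ ≤ Real.exp (-(2 * ε) * t) *
          ∑ j ∈ Finset.range k,
            (j ! : ℝ)⁻¹ * ((j ! : ℝ) * ε⁻¹ ^ j * Real.exp (ε * t)) * ‖N ^ j *ᵥ x‖ := by
          refine mul_le_mul_of_nonneg_left (Finset.sum_le_sum fun j _ => ?_) (Real.exp_nonneg _)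
          have h5 : (0:ℝ) ≤ (j ! : ℝ)⁻¹ := by positivity
          have := hpow j
          gcongr
      _ = (∑ j ∈ Finset.range k, ε⁻¹ ^ j * ‖N ^ j *ᵥ x‖) *
            (Real.exp (-(2 * ε) * t) * Real.exp (ε * t)) := by
          rw [Finset.mul_sum, Finset.sum_mul]
          refine Finset.sum_congr rfl fun j _ => ?_
          have hj : ((j !: ℝ)) ≠ 0 := by positivity
          have h6 : (j ! : ℝ)⁻¹ * ((j ! : ℝ) * ε⁻¹ ^ j * Real.exp (ε * t))
              = ε⁻¹ ^ j * Real.exp (ε * t) := by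
            rw [← mul_assoc, ← mul_assoc, inv_mul_cancel₀ hj, one_mul]
          rw [h6]
          ring
      _ = (∑ j ∈ Finset.range k, ε⁻¹ ^ j * ‖N ^ j *ᵥ x‖) * Real.exp (-ε * t) := by
          rw [← Real.exp_add]
          congr 1
          ring
  · exact ⟨0, le_refl 0, fun t _ => by simp [Matrix.mulVec_zero]⟩
  · rintro x y ⟨Cx, hCx0, hCx⟩ ⟨Cy, hCy0, hCy⟩
    refine ⟨Cx + Cy, by positivity, fun t ht => ?_⟩
    calc ‖exp ((-(t : ℂ)) • A) *ᵥ (x + y)‖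
        = ‖exp ((-(t : ℂ)) • A) *ᵥ x + exp ((-(t : ℂ)) • A) *ᵥ y‖ := by
          rw [Matrix.mulVec_add]
      _ ≤ ‖exp ((-(t : ℂ)) • A) *ᵥ x‖ + ‖exp ((-(t : ℂ)) • A) *ᵥ y‖ := norm_add_le _ _
      _ ≤ Cx * Real.exp (-ε * t) + Cy * Real.exp (-ε * t) := add_le_add (hCx t ht) (hCy t ht)
      _ = (Cx + Cy) * Real.exp (-ε * t) := by ring

lemma mat_decay (A : Matrix (Fin n) (Fin n) ℂ)
    (hA : ∀ μ ∈ spectrum ℂ A, 0 < μ.re) :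
    ∃ ε : ℝ, 0 < ε ∧ ∃ C : ℝ, 0 ≤ C ∧ ∀ t : ℝ, 0 ≤ t →
      ‖exp ((-(t : ℂ)) • A)‖ ≤ C * Real.exp (-ε * t) := by
  classical
  rcases Nat.eq_zero_or_pos n with hn | hn
  · refine ⟨1, one_pos, 0, le_refl 0, fun t ht => ?_⟩
    subst hn
    have : exp ((-(t : ℂ)) • A) = 0 := by
      ext i j
      exact i.elim0
    rw [this, norm_zero, zero_mul]
  · haveI : Nonempty (Fin n) := ⟨⟨0, hn⟩⟩
    have hfin : (spectrum ℂ A).Finite := A.finite_spectrum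
    have hne : hfin.toFinset.Nonempty := by
      rw [Set.Finite.toFinset_nonempty]
      exact spectrum.nonempty A
    set δ : ℝ := hfin.toFinset.inf' hne fun μ => μ.re with hδdef
    have hδpos : 0 < δ := by
      rw [hδdef, Finset.lt_inf'_iff]
      intro μ hμ
      exact hA μ (hfin.mem_toFinset.mp hμ)
    have hspec : ∀ μ ∈ spectrum ℂ A, 2 * (δ / 2) ≤ μ.re := by
      intro μ hμ
      have := Finset.inf'_le (fun μ : ℂ => μ.re) (hfin.mem_toFinset.mpr hμ)
      linarith
    have hε : 0 < δ / 2 := by linarith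
    have h := fun j : Fin n => vec_decay A hε hspec (Pi.single j 1)
    choose Cv hCv0 hCv using h
    refine ⟨δ / 2, hε, ∑ i : Fin n, ∑ j : Fin n, Cv j,
      Finset.sum_nonneg fun i _ => Finset.sum_nonneg fun j _ => hCv0 j, fun t ht => ?_⟩
    have hentry : ∀ i j : Fin n, ‖exp ((-(t : ℂ)) • A) i j‖ ≤ Cv j * Real.exp (-(δ/2) * t) := by
      intro i j
      have h1 : exp ((-(t : ℂ)) • A) i j = (exp ((-(t : ℂ)) • A) *ᵥ Pi.single j 1) i := by
        rw [Matrix.mulVec_single_one]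
        rfl
      rw [h1]
      exact (norm_le_pi_norm _ i).trans (hCv j t ht)
    calc ‖exp ((-(t : ℂ)) • A)‖
        ≤ ∑ i : Fin n, ∑ j : Fin n, ‖exp ((-(t : ℂ)) • A) i j‖ := norm_le_sum_entries _
      _ ≤ ∑ i : Fin n, ∑ j : Fin n, Cv j * Real.exp (-(δ/2) * t) :=
          Finset.sum_le_sum fun i _ => Finset.sum_le_sum fun j _ => hentry i j
      _ = (∑ i : Fin n, ∑ j : Fin n, Cv j) * Real.exp (-(δ/2) * t) := by
          rw [Finset.sum_mul]
          refine Finset.sum_congr rfl fun i _ => ?_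
          rw [Finset.sum_mul]

end Stmt0Aux

/-- If `A` is an `n×n` complex matrix all of whose eigenvalues have positive
real part, and `B` is an `n×n` complex matrix, then the controllability Gramian
`L = ∫₀^∞ e^{-tA} B Bᴴ e^{-tAᴴ} dt` converges (entrywise Bochner integrability) and satisfies
the Lyapunov equation `A * L + L * Aᴴ = B * Bᴴ`. -/
theorem stmt0 (n : ℕ) (A B : Matrix (Fin n) (Fin n) ℂ)
    (hA : ∀ μ ∈ spectrum ℂ A, 0 < μ.re) :
    (∀ i j, IntegrableOn
        (fun t : ℝ =>
          (exp ((-(t : ℂ)) • A) * B * Bᴴ * exp ((-(t : ℂ)) • Aᴴ)) i j)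
        (Set.Ioi (0 : ℝ))) ∧
      A * (Matrix.of fun i j =>
            ∫ t in Set.Ioi (0 : ℝ),
              (exp ((-(t : ℂ)) • A) * B * Bᴴ * exp ((-(t : ℂ)) • Aᴴ)) i j) +
        (Matrix.of fun i j =>
            ∫ t in Set.Ioi (0 : ℝ),
              (exp ((-(t : ℂ)) • A) * B * Bᴴ * exp ((-(t : ℂ)) • Aᴴ)) i j) * Aᴴ
      = B * Bᴴ := by
  classical
  obtain ⟨ε, hε, C, hC0, hC⟩ := Stmt0Aux.mat_decay A hA
  set U : ℝ → Matrix (Fin n) (Fin n) ℂ := fun t => exp ((-(t : ℂ)) • A) with hUdef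
  set W : ℝ → Matrix (Fin n) (Fin n) ℂ := fun t => exp ((-(t : ℂ)) • Aᴴ) with hWdef
  set G : ℝ → Matrix (Fin n) (Fin n) ℂ := fun t => U t * B * Bᴴ * W t with hGdef
  have hGt : ∀ t : ℝ,
      exp ((-(t : ℂ)) • A) * B * Bᴴ * exp ((-(t : ℂ)) • Aᴴ) = G t := fun _ => rfl
  simp only [hGt]
  have hWstar : ∀ t : ℝ, W t = star (U t) := by
    intro t
    show exp ((-(t : ℂ)) • Aᴴ) = star (exp ((-(t : ℂ)) • A))
    have harg : (-(t : ℂ)) • Aᴴ = star ((-(t : ℂ)) • A) := by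
      simp [star_smul, Matrix.star_eq_conjTranspose, Complex.star_def, Complex.conj_ofReal]
    rw [harg, star_exp]
  have hWnorm : ∀ t : ℝ, 0 ≤ t → ‖W t‖ ≤ ((n ^ 2 : ℝ) * C) * Real.exp (-ε * t) := by
    intro t ht
    calc ‖W t‖ ≤ ∑ i : Fin n, ∑ j : Fin n, ‖W t i j‖ := Stmt0Aux.norm_le_sum_entries _
      _ ≤ ∑ _i : Fin n, ∑ _j : Fin n, C * Real.exp (-ε * t) := by
          refine Finset.sum_le_sum fun i _ => Finset.sum_le_sum fun j _ => ?_
          rw [hWstar t, Matrix.star_apply, norm_star]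
          exact (Stmt0Aux.entry_norm_le _ _ _).trans (hC t ht)
      _ = (n ^ 2 : ℝ) * C * Real.exp (-ε * t) := by
          simp [Finset.sum_const, Finset.card_univ]
          ring
  have hGnorm : ∀ t : ℝ, 0 ≤ t →
      ‖G t‖ ≤ (C * ‖B‖ * ‖Bᴴ‖ * ((n ^ 2 : ℝ) * C)) * Real.exp (-(2 * ε) * t) := by
    intro t ht
    have h1 : ‖G t‖ ≤ ‖U t‖ * ‖B‖ * ‖Bᴴ‖ * ‖W t‖ := by
      calc ‖G t‖ ≤ ‖U t * B * Bᴴ‖ * ‖W t‖ := norm_mul_le _ _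
        _ ≤ (‖U t * B‖ * ‖Bᴴ‖) * ‖W t‖ := by
            have := norm_mul_le (U t * B) Bᴴ
            exact mul_le_mul_of_nonneg_right this (norm_nonneg _)
        _ ≤ ((‖U t‖ * ‖B‖) * ‖Bᴴ‖) * ‖W t‖ := by
            have := norm_mul_le (U t) B
            have h2 := mul_le_mul_of_nonneg_right this (norm_nonneg Bᴴ)
            exact mul_le_mul_of_nonneg_right h2 (norm_nonneg _)
    calc ‖G t‖ ≤ ‖U t‖ * ‖B‖ * ‖Bᴴ‖ * ‖W t‖ := h1
      _ ≤ (C * Real.exp (-ε * t)) * ‖B‖ * ‖Bᴴ‖ * (((n ^ 2 : ℝ) * C) * Real.exp (-ε * t)) := by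
          have hU := hC t ht
          have hW := hWnorm t ht
          gcongr
      _ = (C * ‖B‖ * ‖Bᴴ‖ * ((n ^ 2 : ℝ) * C)) * (Real.exp (-ε * t) * Real.exp (-ε * t)) := by
          ring
      _ = (C * ‖B‖ * ‖Bᴴ‖ * ((n ^ 2 : ℝ) * C)) * Real.exp (-(2 * ε) * t) := by
          rw [← Real.exp_add]
          congr 1
          ring
  set K : ℝ := C * ‖B‖ * ‖Bᴴ‖ * ((n ^ 2 : ℝ) * C) with hKdef
  have hUcont : Continuous U :=
    exp_continuous.comp ((Complex.continuous_ofReal.neg).smul continuous_const)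
  have hWcont : Continuous W :=
    exp_continuous.comp ((Complex.continuous_ofReal.neg).smul continuous_const)
  have hGcont : Continuous G :=
    ((hUcont.mul continuous_const).mul continuous_const).mul hWcont
  have hGint : IntegrableOn G (Set.Ioi (0 : ℝ)) := by
    have hexp : IntegrableOn (fun t : ℝ => K * Real.exp (-(2 * ε) * t)) (Set.Ioi 0) :=
      (exp_neg_integrableOn_Ioi 0 (by positivity)).const_mul K
    refine hexp.mono' hGcont.aestronglyMeasurable.restrict ?_
    filter_upwards [ae_restrict_mem measurableSet_Ioi] with t ht
    exact hGnorm t (le_of_lt ht)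
  let E : Fin n → Fin n → (Matrix (Fin n) (Fin n) ℂ →L[ℂ] ℂ) := fun i j =>
    LinearMap.toContinuousLinearMap
      { toFun := fun M => M i j
        map_add' := fun _ _ => rfl
        map_smul' := fun _ _ => rfl }
  have hint : ∀ i j, IntegrableOn (fun t => G t i j) (Set.Ioi (0 : ℝ)) := fun i j =>
    (E i j).integrable_comp hGint
  refine ⟨hint, ?_⟩
  have hLmat : (Matrix.of fun i j => ∫ t in Set.Ioi (0 : ℝ), G t i j)
      = ∫ t in Set.Ioi (0 : ℝ), G t := by
    ext i j
    rw [Matrix.of_apply]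
    calc (∫ t in Set.Ioi (0 : ℝ), G t i j)
        = ∫ t in Set.Ioi (0 : ℝ), E i j (G t) := rfl
      _ = E i j (∫ t in Set.Ioi (0 : ℝ), G t) := (E i j).integral_comp_comm hGint
      _ = (∫ t in Set.Ioi (0 : ℝ), G t) i j := rfl
  rw [hLmat]
  have hU' : ∀ t : ℝ, HasDerivAt U (-(A * U t)) t := by
    intro t
    have h1 : HasDerivAt (fun z : ℂ => exp (z • A)) (exp ((-(t : ℂ)) • A) * A) (-(t : ℂ)) :=
      hasDerivAt_exp_smul_const A (-(t : ℂ))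
    have h2 : HasDerivAt (fun s : ℝ => -(s : ℂ)) (-1) t := by
      exact (hasDerivAt_id t).ofReal_comp.neg
    have h3 := h1.scomp t h2
    have hcomm : A * U t = U t * A := by
      have h4 : Commute A ((-(t : ℂ)) • A) := (Commute.refl A).smul_right _
      exact h4.exp_right.eq
    have h5 : ((-1 : ℂ) • (exp ((-(t : ℂ)) • A) * A)) = -(A * U t) := by
      rw [neg_smul, one_smul, hcomm]
    exact h5 ▸ h3
  have hW' : ∀ t : ℝ, HasDerivAt W (-(W t * Aᴴ)) t := by
    intro t
    have h1 : HasDerivAt (fun z : ℂ => exp (z • Aᴴ))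
        (exp ((-(t : ℂ)) • Aᴴ) * Aᴴ) (-(t : ℂ)) :=
      hasDerivAt_exp_smul_const Aᴴ (-(t : ℂ))
    have h2 : HasDerivAt (fun s : ℝ => -(s : ℂ)) (-1) t := by
      exact (hasDerivAt_id t).ofReal_comp.neg
    have h3 := h1.scomp t h2
    have h5 : ((-1 : ℂ) • (exp ((-(t : ℂ)) • Aᴴ) * Aᴴ)) = -(W t * Aᴴ) := by
      rw [neg_smul, one_smul]
    exact h5 ▸ h3
  have hG' : ∀ t : ℝ, HasDerivAt G (-(A * G t) - G t * Aᴴ) t := by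
    intro t
    have h5 := (((hU' t).mul_const B).mul_const Bᴴ).mul (hW' t)
    have h6 : -(A * G t) - G t * Aᴴ
        = -(A * U t) * B * Bᴴ * W t + U t * B * Bᴴ * -(W t * Aᴴ) := by
      rw [hGdef]
      noncomm_ring
    exact h6 ▸ h5
  have hLint : IntegrableOn (fun t => A * G t) (Set.Ioi (0 : ℝ)) :=
    ((LinearMap.mulLeft ℂ A).toContinuousLinearMap).integrable_comp hGint
  have hRint : IntegrableOn (fun t => G t * Aᴴ) (Set.Ioi (0 : ℝ)) :=
    ((LinearMap.mulRight ℂ Aᴴ).toContinuousLinearMap).integrable_comp hGint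
  have hf'int : IntegrableOn (fun t => A * G t + G t * Aᴴ) (Set.Ioi (0 : ℝ)) :=
    ((LinearMap.mulLeft ℂ A + LinearMap.mulRight ℂ Aᴴ).toContinuousLinearMap).integrable_comp hGint
  have htendexp : Filter.Tendsto (fun t : ℝ => K * Real.exp (-(2 * ε) * t))
      Filter.atTop (nhds 0) := by
    have h1 : Filter.Tendsto (fun t : ℝ => (2 * ε) * t) Filter.atTop Filter.atTop :=
      Filter.Tendsto.const_mul_atTop (by positivity) Filter.tendsto_id
    have h2 := Real.tendsto_exp_neg_atTop_nhds_zero.comp h1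
    have h3 : (fun t : ℝ => Real.exp (-(2 * ε) * t))
        = (fun x : ℝ => Real.exp (-x)) ∘ fun t : ℝ => (2 * ε) * t := by
      funext t
      simp [neg_mul]
    rw [← h3] at h2
    simpa using h2.const_mul K
  have htend : Filter.Tendsto (fun t => -(G t)) Filter.atTop (nhds 0) := by
    rw [← neg_zero]
    refine Filter.Tendsto.neg ?_
    refine squeeze_zero_norm' ?_ htendexp
    exact Filter.eventually_atTop.mpr ⟨0, fun t ht => hGnorm t ht⟩
  have h9 := integral_Ioi_of_hasDerivAt_of_tendsto
    (f := fun t => -(G t)) (f' := fun t => A * G t + G t * Aᴴ) (a := (0 : ℝ)) (m := 0)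
    hGcont.neg.continuousWithinAt
    (fun x _ => by
      have h := (hG' x).neg
      rw [neg_sub, sub_neg_eq_add, add_comm] at h
      exact h)
    hf'int htend
  have hG0 : G 0 = B * Bᴴ := by
    rw [hGdef]
    simp only [hUdef, hWdef]
    norm_num [exp_zero]
  have hAL : A * (∫ t in Set.Ioi (0 : ℝ), G t) = ∫ t in Set.Ioi (0 : ℝ), A * G t :=
    ((LinearMap.mulLeft ℂ A).toContinuousLinearMap.integral_comp_comm hGint).symm
  have hLA : (∫ t in Set.Ioi (0 : ℝ), G t) * Aᴴ = ∫ t in Set.Ioi (0 : ℝ), G t * Aᴴ :=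
    ((LinearMap.mulRight ℂ Aᴴ).toContinuousLinearMap.integral_comp_comm hGint).symm
  rw [hAL, hLA, ← integral_add hLint hRint, h9]
  simp [hG0]
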